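/- arXiv:2206.06793 — 4 statements merged into one kernel-verified Lean document; each statement's English description precedes it below -/
import Mathlib

section
/- Every satisfiable sentential first-order standpoint logic formula φ has a model with at most |φ| precisifications, where |φ| is the number of subformulas of φ. Hence for sentential formulas, satisfiability coincides with |φ|-satisfiability. -/
namespace FOSL

/-- Standpoint expressions: e ::= * | s | e∪e | e∩e | e∖e -/
inductive SE (S : Type) : Type
  | star : SE S
  | sym : S → SE S
  | union : SE S → SE S → SE S
  | inter : SE S → SE S → SE S
  | diff : SE S → SE S → SE S

/-- FOSL formulas over predicates `P` (with arities `ar`), constants `C`,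
standpoint symbols `S`; variables are natural numbers. -/
inductive Fm (P : Type) (ar : P → ℕ) (C : Type) (S : Type) : Type
  | atom : (p : P) → (Fin (ar p) → C ⊕ ℕ) → Fm P ar C S
  | eq : (C ⊕ ℕ) → (C ⊕ ℕ) → Fm P ar C S
  | neg : Fm P ar C S → Fm P ar C S
  | conj : Fm P ar C S → Fm P ar C S → Fm P ar C S
  | all : ℕ → Fm P ar C S → Fm P ar C S
  | box : SE S → Fm P ar C S → Fm P ar C S

variable {P : Type} {ar : P → ℕ} {C S : Type}

def Fm.disj (φ ψ : Fm P ar C S) : Fm P ar C S := .neg (.conj (.neg φ) (.neg ψ))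
def Fm.impl (φ ψ : Fm P ar C S) : Fm P ar C S := .neg (.conj φ (.neg ψ))
def Fm.ex (x : ℕ) (φ : Fm P ar C S) : Fm P ar C S := .neg (.all x (.neg φ))
def Fm.dia (e : SE S) (φ : Fm P ar C S) : Fm P ar C S := .neg (.box e (.neg φ))

/-- First-order standpoint structures (constant domain, rigid constants). -/
structure Model (P : Type) (ar : P → ℕ) (C : Type) (S : Type) : Type 1 where
  Dom : Type
  dom_ne : Nonempty Dom
  Prec : Type
  prec_ne : Nonempty Prec
  σ : S → Set Prec
  interpP : Prec → (p : P) → (Fin (ar p) → Dom) → Prop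
  interpC : C → Dom

/-- Homomorphic extension of σ to standpoint expressions, with σ(*) = Π. -/
def Model.σE (M : Model P ar C S) : SE S → Set M.Prec
  | .star => Set.univ
  | .sym s => M.σ s
  | .union e1 e2 => M.σE e1 ∪ M.σE e2
  | .inter e1 e2 => M.σE e1 ∩ M.σE e2
  | .diff e1 e2 => M.σE e1 \ M.σE e2

def Model.termVal (M : Model P ar C S) (v : ℕ → M.Dom) : C ⊕ ℕ → M.Dom
  | .inl c => M.interpC c
  | .inr x => v x

/-- Satisfaction `M, π, v ⊨ φ`. -/
def Model.sat (M : Model P ar C S) : M.Prec → (ℕ → M.Dom) → Fm P ar C S → Prop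
  | π, v, .atom p ts => M.interpP π p fun i => M.termVal v (ts i)
  | _, v, .eq t1 t2 => M.termVal v t1 = M.termVal v t2
  | π, v, .neg φ => ¬ M.sat π v φ
  | π, v, .conj φ ψ => M.sat π v φ ∧ M.sat π v ψ
  | π, v, .all x φ => ∀ δ : M.Dom, M.sat π (Function.update v x δ) φ
  | _, v, .box e φ => ∀ π' ∈ M.σE e, M.sat π' v φ

/-- `M ⊨ φ`: satisfaction at all precisifications and assignments. -/
def Model.satM (M : Model P ar C S) (φ : Fm P ar C S) : Prop :=
  ∀ (π : M.Prec) (v : ℕ → M.Dom), M.sat π v φ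

def tmVars : C ⊕ ℕ → Finset ℕ
  | .inl _ => ∅
  | .inr x => {x}

/-- Free variables. -/
def Fm.fv : Fm P ar C S → Finset ℕ
  | .atom _ ts => Finset.univ.biUnion fun i => tmVars (ts i)
  | .eq t1 t2 => tmVars t1 ∪ tmVars t2
  | .neg φ => φ.fv
  | .conj φ ψ => φ.fv ∪ ψ.fv
  | .all x φ => φ.fv.erase x
  | .box _ φ => φ.fv

/-- Sentential: in every subformula □_e ψ, ψ has no free variables. -/
def Fm.sentential : Fm P ar C S → Prop
  | .atom _ _ => True
  | .eq _ _ => True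
  | .neg φ => φ.sentential
  | .conj φ ψ => φ.sentential ∧ ψ.sentential
  | .all _ φ => φ.sentential
  | .box _ φ => φ.fv = ∅ ∧ φ.sentential

/-- Set of subformulas. -/
def Fm.Sub : Fm P ar C S → Set (Fm P ar C S)
  | .atom p ts => {.atom p ts}
  | .eq t1 t2 => {.eq t1 t2}
  | .neg φ => insert (.neg φ) φ.Sub
  | .conj φ ψ => insert (.conj φ ψ) (φ.Sub ∪ ψ.Sub)
  | .all x φ => insert (.all x φ) φ.Sub
  | .box e φ => insert (.box e φ) φ.Sub

/-- |φ| = number of subformulas of φ. -/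
noncomputable def Fm.size (φ : Fm P ar C S) : ℕ := φ.Sub.ncard

def satisfiable (φ : Fm P ar C S) : Prop := ∃ M : Model P ar C S, M.satM φ

/-- n-satisfiable: has a model with exactly n precisifications. -/
def nsatisfiable (n : ℕ) (φ : Fm P ar C S) : Prop :=
  ∃ M : Model P ar C S, M.satM φ ∧ Nat.card M.Prec = n

def Fm.boxfree : Fm P ar C S → Prop
  | .atom _ _ => True
  | .eq _ _ => True
  | .neg φ => φ.boxfree
  | .conj φ ψ => φ.boxfree ∧ ψ.boxfree
  | .all _ φ => φ.boxfree
  | .box _ _ => False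

/-- Standpoint standard normal form: no nested modalities. -/
def Fm.ssnf : Fm P ar C S → Prop
  | .atom _ _ => True
  | .eq _ _ => True
  | .neg φ => φ.ssnf
  | .conj φ ψ => φ.ssnf ∧ ψ.ssnf
  | .all _ φ => φ.ssnf
  | .box _ φ => φ.boxfree

/-- Restriction of a standpoint structure to a nonempty subset of precisifications. -/
def Model.restrict (M : Model P ar C S) (Ps : Set M.Prec) (h : Ps.Nonempty) :
    Model P ar C S where
  Dom := M.Dom
  dom_ne := M.dom_ne
  Prec := Ps
  prec_ne := h.to_subtype
  σ := fun s => {π : Ps | (π : M.Prec) ∈ M.σ s}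
  interpP := fun π => M.interpP π
  interpC := M.interpC

/-! ### Plain first-order logic -/

inductive FO (Q : Type) (arQ : Q → ℕ) (C : Type) : Type
  | tt
  | atom (q : Q) (ts : Fin (arQ q) → C ⊕ ℕ)
  | eq (t1 t2 : C ⊕ ℕ)
  | neg (φ : FO Q arQ C)
  | conj (φ ψ : FO Q arQ C)
  | all (x : ℕ) (φ : FO Q arQ C)

variable {Q : Type} {arQ : Q → ℕ}

def FO.impl (φ ψ : FO Q arQ C) : FO Q arQ C := .neg (.conj φ (.neg ψ))

def FO.conjList : List (FO Q arQ C) → FO Q arQ C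
  | [] => .tt
  | φ :: l => .conj φ (FO.conjList l)

structure FOModel (Q : Type) (arQ : Q → ℕ) (C : Type) : Type 1 where
  Dom : Type
  dom_ne : Nonempty Dom
  interp : (q : Q) → (Fin (arQ q) → Dom) → Prop
  interpC : C → Dom

def FOModel.termVal (I : FOModel Q arQ C) (v : ℕ → I.Dom) : C ⊕ ℕ → I.Dom
  | .inl c => I.interpC c
  | .inr x => v x

def FOModel.sat (I : FOModel Q arQ C) : (ℕ → I.Dom) → FO Q arQ C → Prop
  | _, .tt => True
  | v, .atom q ts => I.interp q fun i => I.termVal v (ts i)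
  | v, .eq t1 t2 => I.termVal v t1 = I.termVal v t2
  | v, .neg φ => ¬ I.sat v φ
  | v, .conj φ ψ => I.sat v φ ∧ I.sat v ψ
  | v, .all x φ => ∀ δ : I.Dom, I.sat (Function.update v x δ) φ

def FOModel.satM (I : FOModel Q arQ C) (φ : FO Q arQ C) : Prop := ∀ v, I.sat v φ

def fosatisfiable (φ : FO Q arQ C) : Prop := ∃ I : FOModel Q arQ C, I.satM φ

/-! ### Translation to plain FO -/

/-- Translated vocabulary: a predicate P_π for each P and π, and nullary
predicates s_π (for `some s`) and *_π (for `none`). -/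
abbrev TQ (P S Pre : Type) : Type := (P × Pre) ⊕ (Option S × Pre)

def tAr (ar : P → ℕ) {S Pre : Type} : TQ P S Pre → ℕ
  | .inl (p, _) => ar p
  | .inr _ => 0

variable {Pre : Type}

/-- trans_E(π, e). -/
def transE (π : Pre) : SE S → FO (TQ P S Pre) (tAr ar) C
  | .star => .atom (.inr (none, π)) Fin.elim0
  | .sym s => .atom (.inr (some s, π)) Fin.elim0
  | .union e1 e2 => .neg (.conj (.neg (transE π e1)) (.neg (transE π e2)))
  | .inter e1 e2 => .conj (transE π e1) (transE π e2)
  | .diff e1 e2 => .conj (transE π e1) (.neg (transE π e2))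

/-- trans_n(π, φ). -/
noncomputable def transF [Fintype Pre] (π : Pre) : Fm P ar C S → FO (TQ P S Pre) (tAr ar) C
  | .atom p ts => .atom (.inl (p, π)) ts
  | .eq t1 t2 => .eq t1 t2
  | .neg φ => .neg (transF π φ)
  | .conj φ ψ => .conj (transF π φ) (transF π ψ)
  | .all x φ => .all x (transF π φ)
  | .box e φ =>
      FO.conjList ((Finset.univ.toList).map fun π' : Pre =>
        FO.impl (transE π' e) (transF π' φ))

/-- Trans_n(φ) = ⋀_π trans_n(π, φ) ∧ ⋀_π *_π. -/
noncomputable def TransN [Fintype Pre] (φ : Fm P ar C S) : FO (TQ P S Pre) (tAr ar) C :=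
  .conj (FO.conjList ((Finset.univ.toList).map fun π : Pre => transF π φ))
        (FO.conjList ((Finset.univ.toList).map fun π : Pre =>
          FO.atom (.inr (none, π)) Fin.elim0))

/-- The plain first-order structure I_M associated with a standpoint structure M. -/
def Model.toFO (M : Model P ar C S) : FOModel (TQ P S M.Prec) (tAr ar) C where
  Dom := M.Dom
  dom_ne := M.dom_ne
  interp := fun q => match q with
    | .inl (p, π) => fun args => M.interpP π p args
    | .inr (none, _) => fun _ => True
    | .inr (some s, π) => fun _ => π ∈ M.σ s
  interpC := M.interpC



section SmallModel

variable {P : Type} {ar : P → ℕ} {C S : Type}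

lemma Fm.mem_Sub_self (φ : Fm P ar C S) : φ ∈ φ.Sub := by
  cases φ <;> simp [Fm.Sub]

lemma Fm.Sub_finite (φ : Fm P ar C S) : φ.Sub.Finite := by
  induction φ with
  | atom p ts => exact Set.finite_singleton _
  | eq t1 t2 => exact Set.finite_singleton _
  | neg φ ih => exact ih.insert _
  | conj φ ψ ih1 ih2 => exact (ih1.union ih2).insert _
  | all x φ ih => exact ih.insert _
  | box e φ ih => exact ih.insert _

lemma Fm.size_pos (φ : Fm P ar C S) : 1 ≤ φ.size :=
  (Set.ncard_pos φ.Sub_finite).mpr ⟨φ, φ.mem_Sub_self⟩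

lemma exists_nonbox (φ : Fm P ar C S) :
    ∃ χ ∈ φ.Sub, ∀ e ψ, χ ≠ Fm.box e ψ := by
  induction φ with
  | atom p ts =>
    exact ⟨Fm.atom p ts, by simp [Fm.Sub], fun e ψ h => by cases h⟩
  | eq t1 t2 =>
    exact ⟨Fm.eq t1 t2, by simp [Fm.Sub], fun e ψ h => by cases h⟩
  | neg φ ih =>
    obtain ⟨χ, hmem, hnb⟩ := ih
    exact ⟨χ, Set.mem_insert_of_mem _ hmem, hnb⟩
  | conj φ ψ ih1 ih2 =>
    obtain ⟨χ, hmem, hnb⟩ := ih1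
    exact ⟨χ, Set.mem_insert_of_mem _ (Set.mem_union_left _ hmem), hnb⟩
  | all x φ ih =>
    obtain ⟨χ, hmem, hnb⟩ := ih
    exact ⟨χ, Set.mem_insert_of_mem _ hmem, hnb⟩
  | box e φ ih =>
    obtain ⟨χ, hmem, hnb⟩ := ih
    exact ⟨χ, Set.mem_insert_of_mem _ hmem, hnb⟩

lemma sat_congr (M : Model P ar C S) (φ : Fm P ar C S) :
    ∀ (π : M.Prec) (v v' : ℕ → M.Dom), (∀ x ∈ φ.fv, v x = v' x) →
      (M.sat π v φ ↔ M.sat π v' φ) := by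
  induction φ with
  | atom p ts =>
    intro π v v' h
    simp only [Model.sat]
    have : (fun i => M.termVal v (ts i)) = fun i => M.termVal v' (ts i) := by
      funext i
      cases hts : ts i with
      | inl c => simp [Model.termVal]
      | inr x =>
        simp only [Model.termVal]
        apply h
        simp only [Fm.fv, Finset.mem_biUnion, Finset.mem_univ, true_and]
        exact ⟨i, by simp [hts, tmVars]⟩
    rw [this]
  | eq t1 t2 =>
    intro π v v' h
    simp only [Model.sat]
    have h1 : M.termVal v t1 = M.termVal v' t1 := by
      cases t1 with
      | inl c => rfl
      | inr x => exact h x (by simp [Fm.fv, tmVars])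
    have h2 : M.termVal v t2 = M.termVal v' t2 := by
      cases t2 with
      | inl c => rfl
      | inr x => exact h x (by simp [Fm.fv, tmVars])
    rw [h1, h2]
  | neg φ ih =>
    intro π v v' h
    simp only [Model.sat]
    rw [ih π v v' h]
  | conj φ ψ ih1 ih2 =>
    intro π v v' h
    simp only [Model.sat]
    rw [ih1 π v v' fun x hx => h x (by simp [Fm.fv, hx]),
        ih2 π v v' fun x hx => h x (by simp [Fm.fv, hx])]
  | all x φ ih =>
    intro π v v' h
    simp only [Model.sat]
    apply forall_congr'
    intro δ
    apply ih
    intro y hy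
    by_cases hxy : y = x
    · subst hxy; simp
    · simp only [Function.update_apply, if_neg hxy]
      exact h y (by simp [Fm.fv, Finset.mem_erase, hxy, hy])
  | box e φ ih =>
    intro π v v' h
    simp only [Model.sat]
    exact forall_congr' fun π' => imp_congr Iff.rfl (ih π' v v' h)

lemma Model.restrict_σE (M : Model P ar C S) (Ps : Set M.Prec) (h : Ps.Nonempty)
    (e : SE S) : (M.restrict Ps h).σE e = {π : Ps | (π : M.Prec) ∈ M.σE e} := by
  induction e with
  | star => rfl
  | sym s => rfl
  | union e1 e2 ih1 ih2 => simp only [Model.σE, ih1, ih2]; rfl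
  | inter e1 e2 ih1 ih2 => simp only [Model.σE, ih1, ih2]; rfl
  | diff e1 e2 ih1 ih2 => simp only [Model.σE, ih1, ih2]; rfl

lemma restrict_sat (M : Model P ar C S) (Ps : Set M.Prec) (hne : Ps.Nonempty)
    (Φ : Fm P ar C S)
    (H : ∀ e ψ (v : ℕ → M.Dom), Fm.box e ψ ∈ Φ.Sub → ψ.fv = ∅ →
        (∃ π' ∈ M.σE e, ¬ M.sat π' v ψ) →
        ∃ π' ∈ Ps, π' ∈ M.σE e ∧ ¬ M.sat π' v ψ) :
    ∀ χ : Fm P ar C S, χ.sentential → χ.Sub ⊆ Φ.Sub →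
      ∀ (π : Ps) (v : ℕ → M.Dom),
        ((M.restrict Ps hne).sat π v χ ↔ M.sat π.1 v χ) := by
  intro χ
  induction χ with
  | atom p ts => exact fun _ _ π v => Iff.rfl
  | eq t1 t2 => exact fun _ _ π v => Iff.rfl
  | neg φ ih =>
    intro hsent hsub π v
    simp only [Model.sat]
    rw [ih hsent (fun y hy => hsub (Set.mem_insert_of_mem _ hy)) π v]
  | conj φ ψ ih1 ih2 =>
    intro hsent hsub π v
    simp only [Model.sat]
    rw [ih1 hsent.1 (fun y hy => hsub (Set.mem_insert_of_mem _ (Set.mem_union_left _ hy))) π v,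
        ih2 hsent.2 (fun y hy => hsub (Set.mem_insert_of_mem _ (Set.mem_union_right _ hy))) π v]
  | all x φ ih =>
    intro hsent hsub π v
    simp only [Model.sat]
    exact forall_congr' fun δ =>
      ih hsent (fun y hy => hsub (Set.mem_insert_of_mem _ hy)) π (Function.update v x δ)
  | box e ψ ih =>
    intro hsent hsub π v
    obtain ⟨hfv, hψsent⟩ := hsent
    have hsubψ : ψ.Sub ⊆ Φ.Sub := fun y hy => hsub (Set.mem_insert_of_mem _ hy)
    have hboxmem : Fm.box e ψ ∈ Φ.Sub := hsub (Fm.mem_Sub_self _)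
    simp only [Model.sat]
    constructor
    · intro hall π' hπ'
      by_contra hc
      obtain ⟨w, hwPs, hwσ, hwns⟩ := H e ψ v hboxmem hfv ⟨π', hπ', hc⟩
      have hmem : (⟨w, hwPs⟩ : Ps) ∈ (M.restrict Ps hne).σE e := by
        rw [Model.restrict_σE]; exact hwσ
      exact hwns ((ih hψsent hsubψ ⟨w, hwPs⟩ v).mp (hall _ hmem))
    · intro hall π' hπ'
      rw [Model.restrict_σE] at hπ'
      exact (ih hψsent hsubψ π' v).mpr (hall _ hπ')

/-- Pullback of a model along a map into its precisifications. -/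
def Model.pull (M : Model P ar C S) (T : Type) (hT : Nonempty T) (f : T → M.Prec) :
    Model P ar C S where
  Dom := M.Dom
  dom_ne := M.dom_ne
  Prec := T
  prec_ne := hT
  σ := fun s => f ⁻¹' M.σ s
  interpP := fun t => M.interpP (f t)
  interpC := M.interpC

lemma Model.pull_σE (M : Model P ar C S) (T : Type) (hT : Nonempty T) (f : T → M.Prec)
    (e : SE S) : (M.pull T hT f).σE e = f ⁻¹' M.σE e := by
  induction e with
  | star => ext t; simp [Model.σE]; exact trivial
  | sym s => ext t; simp [Model.σE, Model.pull]
  | union e1 e2 ih1 ih2 => ext t; simp [Model.σE, ih1, ih2]; exact Iff.rfl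
  | inter e1 e2 ih1 ih2 => ext t; simp [Model.σE, ih1, ih2]; exact Iff.rfl
  | diff e1 e2 ih1 ih2 => ext t; simp [Model.σE, ih1, ih2]; exact Iff.rfl

lemma Model.pull_sat (M : Model P ar C S) (T : Type) (hT : Nonempty T) (f : T → M.Prec)
    (hf : Function.Surjective f) :
    ∀ (χ : Fm P ar C S) (t : T) (v : ℕ → M.Dom),
      ((M.pull T hT f).sat t v χ ↔ M.sat (f t) v χ) := by
  intro χ
  induction χ with
  | atom p ts => exact fun t v => Iff.rfl
  | eq t1 t2 => exact fun t v => Iff.rfl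
  | neg φ ih =>
    intro t v
    simp only [Model.sat]
    rw [ih t v]
  | conj φ ψ ih1 ih2 =>
    intro t v
    simp only [Model.sat]
    rw [ih1 t v, ih2 t v]
  | all x φ ih =>
    intro t v
    simp only [Model.sat]
    exact forall_congr' fun δ => ih t (Function.update v x δ)
  | box e ψ ih =>
    intro t v
    simp only [Model.sat, Model.pull_σE]
    constructor
    · intro hall π' hπ'
      obtain ⟨t', rfl⟩ := hf π'
      exact (ih t' v).mp (hall t' hπ')
    · intro hall t' ht'
      exact (ih t' v).mpr (hall _ ht')

end SmallModel

/-- Small model property: every satisfiable sentential FOSL formula has a model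
with at most |φ| precisifications; hence satisfiability and |φ|-satisfiability
coincide for sentential formulas. -/
theorem small_model_property (P : Type) (ar : P → ℕ) (C S : Type)
    (φ : Fm P ar C S) (hφ : φ.sentential) :
    (satisfiable φ →
      ∃ M : Model P ar C S, M.satM φ ∧ Finite M.Prec ∧ Nat.card M.Prec ≤ φ.size) ∧
    (satisfiable φ ↔ nsatisfiable φ.size φ) := by
  classical
  have main : satisfiable φ →
      ∃ M : Model P ar C S, M.satM φ ∧ Finite M.Prec ∧ Nat.card M.Prec ≤ φ.size := by
    rintro ⟨M, hM⟩
    obtain ⟨π0⟩ := M.prec_ne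
    obtain ⟨d0⟩ := M.dom_ne
    set v0 : ℕ → M.Dom := fun _ => d0 with hv0
    have hw : ∀ χ : Fm P ar C S, ∃ π : M.Prec, ∀ e ψ, χ = Fm.box e ψ →
        (∃ π' ∈ M.σE e, ¬ M.sat π' v0 ψ) → π ∈ M.σE e ∧ ¬ M.sat π v0 ψ := by
      intro χ
      cases χ with
      | box e ψ =>
        by_cases hx : ∃ π' ∈ M.σE e, ¬ M.sat π' v0 ψ
        · obtain ⟨π', hπ'1, hπ'2⟩ := hx
          refine ⟨π', ?_⟩
          rintro e' ψ' heq -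
          injection heq with he hψ
          subst he; subst hψ
          exact ⟨hπ'1, hπ'2⟩
        · refine ⟨π0, ?_⟩
          rintro e' ψ' heq hex
          injection heq with he hψ
          subst he; subst hψ
          exact absurd hex hx
      | atom p ts => exact ⟨π0, fun e ψ heq => by cases heq⟩
      | eq t1 t2 => exact ⟨π0, fun e ψ heq => by cases heq⟩
      | neg φ' => exact ⟨π0, fun e ψ heq => by cases heq⟩
      | conj φ' ψ' => exact ⟨π0, fun e ψ heq => by cases heq⟩
      | all x φ' => exact ⟨π0, fun e ψ heq => by cases heq⟩
    choose w hwspec using hw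
    set Bset : Set (Fm P ar C S) := {χ ∈ φ.Sub | ∃ e ψ, χ = Fm.box e ψ} with hBset
    set Ps : Set M.Prec := insert π0 (w '' Bset) with hPsdef
    have hPsne : Ps.Nonempty := ⟨π0, Set.mem_insert _ _⟩
    have hBfin : Bset.Finite := φ.Sub_finite.subset (Set.sep_subset _ _)
    have hPsfin : Ps.Finite := (hBfin.image w).insert π0
    have hH : ∀ e ψ (v : ℕ → M.Dom), Fm.box e ψ ∈ φ.Sub → ψ.fv = ∅ →
        (∃ π' ∈ M.σE e, ¬ M.sat π' v ψ) →
        ∃ π' ∈ Ps, π' ∈ M.σE e ∧ ¬ M.sat π' v ψ := by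
      rintro e ψ v hmem hfv ⟨π', hπ'1, hπ'2⟩
      have hcong : ∀ π : M.Prec, M.sat π v ψ ↔ M.sat π v0 ψ := fun π =>
        sat_congr M ψ π v v0 (fun x hx => by rw [hfv] at hx; cases hx)
      have hx : ∃ π'' ∈ M.σE e, ¬ M.sat π'' v0 ψ :=
        ⟨π', hπ'1, fun hc => hπ'2 ((hcong π').mpr hc)⟩
      obtain ⟨h1, h2⟩ := hwspec (Fm.box e ψ) e ψ rfl hx
      refine ⟨w (Fm.box e ψ), ?_, h1, fun hc => h2 ((hcong _).mp hc)⟩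
      exact Set.mem_insert_of_mem _ (Set.mem_image_of_mem w ⟨hmem, e, ψ, rfl⟩)
    refine ⟨M.restrict Ps hPsne, ?_, hPsfin.to_subtype, ?_⟩
    · intro π v
      exact (restrict_sat M Ps hPsne φ hH φ hφ (subset_refl _) π v).mpr (hM π.1 v)
    · have hcard : Nat.card (M.restrict Ps hPsne).Prec = Ps.ncard :=
        Nat.card_coe_set_eq Ps
      rw [hcard]
      obtain ⟨χ0, hχ0mem, hχ0nb⟩ := exists_nonbox φ
      have hBsub : Bset ⊆ φ.Sub \ {χ0} := by
        rintro χ ⟨hχmem, e, ψ, rfl⟩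
        exact ⟨hχmem, fun hc => hχ0nb e ψ (by rw [← Set.mem_singleton_iff.mp hc])⟩
      have h1 : Bset.ncard ≤ (φ.Sub \ {χ0}).ncard :=
        Set.ncard_le_ncard hBsub (φ.Sub_finite.diff)
      have h2 : (φ.Sub \ {χ0}).ncard = φ.Sub.ncard - 1 :=
        Set.ncard_diff_singleton_of_mem hχ0mem
      have h3 : Ps.ncard ≤ (w '' Bset).ncard + 1 := Set.ncard_insert_le _ _
      have h4 : (w '' Bset).ncard ≤ Bset.ncard := Set.ncard_image_le hBfin
      have h5 : 1 ≤ φ.size := φ.size_pos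
      simp only [Fm.size] at *
      omega
  refine ⟨main, ?_, ?_⟩
  · intro hsat
    obtain ⟨M', hM', hfin, hcard⟩ := main hsat
    haveI := hfin
    haveI := M'.prec_ne
    have hk : 1 ≤ Nat.card M'.Prec := Nat.card_pos
    have hn : 1 ≤ φ.size := φ.size_pos
    set n := φ.size with hndef
    set k := Nat.card M'.Prec with hkdef
    let eqv : M'.Prec ≃ Fin k := Finite.equivFin M'.Prec
    let f : Fin n → M'.Prec := fun i => eqv.symm ⟨min i.1 (k - 1), by omega⟩
    have hf : Function.Surjective f := by
      intro p
      refine ⟨⟨(eqv p).1, lt_of_lt_of_le (eqv p).2 hcard⟩, ?_⟩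
      have : min (eqv p).1 (k - 1) = (eqv p).1 := by
        have := (eqv p).2; omega
      simp only [f, this]
      rw [show (⟨(eqv p).1, (eqv p).2⟩ : Fin k) = eqv p from rfl]
      exact eqv.symm_apply_apply p
    refine ⟨M'.pull (Fin n) ⟨⟨0, hn⟩⟩ f, ?_, ?_⟩
    swap
    · show Nat.card (Fin n) = n
      simp
    intro t v
    exact (M'.pull_sat (Fin n) ⟨⟨0, hn⟩⟩ f hf φ t v).mpr (hM' (f t) v)
  · rintro ⟨M, hM, -⟩
    exact ⟨M, hM⟩


end FOSL
end

section
/- Translation correctness for structures: Let φ be a sentential FOSL formula in standpoint standard normal form (no modal operator occurs inside the scope of another), over signature (P, C, S). Let M = (Δ, Π_n, σ, γ) be a standpoint structure and I_M the associated plain first-order structure over the translated vocabulary (predicates P_π for P ∈ P and π ∈ Π_n with P_π interpreted as P^{γ(π)}, nullary predicates s_π true iff π ∈ σ(s), *_π always true, constants interpreted as in M). Then for every subformula ψ of φ, every π ∈ Π_n, and every variable assignment v: M, π, v ⊨ ψ if and only if I_M, v ⊨ trans_n(π, ψ), where trans_n(π, P(t₁,…,tₖ)) = P_π(t₁,…,tₖ),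 trans_n commutes with ¬, ∧, ∀, and trans_n(π', □_e ψ) = ⋀_{π ∈ Π_n} (trans_E(π, e) → trans_n(π, ψ)). -/
namespace FOSL

variable {P : Type} {ar : P → ℕ} {C S : Type}

variable {Q : Type} {arQ : Q → ℕ}

variable {Pre : Type}

lemma conjList_sat (I : FOModel Q arQ C) (v : ℕ → I.Dom) :
    ∀ l : List (FO Q arQ C), I.sat v (FO.conjList l) ↔ ∀ φ ∈ l, I.sat v φ := by
  intro l
  induction l with
  | nil => simp [FO.conjList, FOModel.sat]
  | cons a t ih => simp [FO.conjList, FOModel.sat, ih]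

lemma transE_correct (M : Model P ar C S) (π : M.Prec) (v : ℕ → M.Dom) :
    ∀ e : SE S, M.toFO.sat v (transE π e) ↔ π ∈ M.σE e := by
  intro e
  induction e with
  | star => simp [transE, FOModel.sat, Model.toFO, Model.σE]
  | sym s => simp [transE, FOModel.sat, Model.toFO, Model.σE]
  | union e1 e2 ih1 ih2 =>
      simp [transE, FOModel.sat, Model.σE, ih1, ih2]; tauto
  | inter e1 e2 ih1 ih2 => simp [transE, FOModel.sat, Model.σE, ih1, ih2]
  | diff e1 e2 ih1 ih2 => simp [transE, FOModel.sat, Model.σE, ih1, ih2]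

lemma trans_correct_aux (M : Model P ar C S) [Fintype M.Prec] :
    ∀ (ψ : Fm P ar C S) (π : M.Prec) (v : ℕ → M.Dom),
      M.sat π v ψ ↔ M.toFO.sat v (transF π ψ) := by
  intro ψ
  induction ψ with
  | atom p ts =>
      intro π v
      simp [Model.sat, transF, FOModel.sat, Model.toFO, Model.termVal,
        FOModel.termVal]
      exact Iff.rfl
  | eq t1 t2 =>
      intro π v
      simp only [Model.sat, transF, FOModel.sat]
      have : ∀ t, M.termVal v t = M.toFO.termVal v t := by
        intro t; cases t <;> rfl
      rw [this, this]
      exact Iff.rfl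
  | neg φ ih => intro π v; simp [Model.sat, transF, FOModel.sat, ih]
  | conj φ₁ φ₂ ih1 ih2 =>
      intro π v; simp [Model.sat, transF, FOModel.sat, ih1, ih2]
  | all x φ ih => intro π v; exact forall_congr' fun δ => ih π _
  | box e φ ih =>
      intro π v
      simp only [Model.sat, transF]
      refine Iff.trans ?_ (conjList_sat M.toFO v _).symm
      simp only [List.mem_map, Finset.mem_toList, Finset.mem_univ, true_and]
      constructor
      · rintro h _ ⟨π', rfl⟩
        simp only [FO.impl, FOModel.sat]
        intro hc
        exact absurd ((ih π' v).mp (h π' ((transE_correct M π' v e).mp hc.1))) hc.2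
      · intro h π' hπ'
        have := h _ ⟨π', rfl⟩
        simp only [FO.impl, FOModel.sat, not_and_not_right] at this
        exact (ih π' v).mpr (this ((transE_correct M π' v e).mpr hπ'))

/-- Translation correctness for structures: for a sentential formula φ in
SSNF and a standpoint structure M with finitely many precisifications,
M, π, v ⊨ ψ iff I_M, v ⊨ trans_n(π, ψ) for every subformula ψ of φ. -/
theorem trans_correct (P : Type) (ar : P → ℕ) (C S : Type)
    (M : Model P ar C S) [Fintype M.Prec]
    (φ : Fm P ar C S) (hs : φ.sentential) (hn : φ.ssnf) :
    ∀ ψ ∈ φ.Sub, ∀ (π : M.Prec) (v : ℕ → M.Dom),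
      M.sat π v ψ ↔ M.toFO.sat v (transF π ψ) := by
  intro ψ _ π v
  exact trans_correct_aux M ψ π v

end FOSL
end

section
/- n-satisfiability via translation: A FOSL formula φ (sentential, in standpoint standard normal form) is n-satisfiable if and only if the plain first-order formula Trans_n(φ) = ⋀_{π ∈ Π_n} trans_n(π, φ) ∧ ⋀_{π ∈ Π_n} *_π is satisfiable in first-order logic. -/
namespace FOSL

variable {P : Type} {ar : P → ℕ} {C S : Type}

variable {Q : Type} {arQ : Q → ℕ}

variable {Pre : Type}

/-! ### Auxiliary lemmas for the proof -/

lemma sat_conjList (I : FOModel Q arQ C) (v : ℕ → I.Dom) (l : List (FO Q arQ C)) :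
    I.sat v (FO.conjList l) ↔ ∀ ψ ∈ l, I.sat v ψ := by
  induction l with
  | nil => simp [FO.conjList, FOModel.sat]
  | cons a l ih => simp [FO.conjList, FOModel.sat, ih]

lemma sat_impl (I : FOModel Q arQ C) (v : ℕ → I.Dom) (a b : FO Q arQ C) :
    I.sat v (FO.impl a b) ↔ (I.sat v a → I.sat v b) := by
  simp [FO.impl, FOModel.sat]

/-- FO model built from a standpoint model and a map `g : Pre → M.Prec`. -/
def mkFO (M : Model P ar C S) (g : Pre → M.Prec) : FOModel (TQ P S Pre) (tAr ar) C where
  Dom := M.Dom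
  dom_ne := M.dom_ne
  interp := fun q => match q with
    | .inl (p, π) => fun args => M.interpP (g π) p args
    | .inr (none, _) => fun _ => True
    | .inr (some s, π) => fun _ => g π ∈ M.σ s
  interpC := M.interpC

lemma mkFO_termVal (M : Model P ar C S) (g : Pre → M.Prec) (v : ℕ → M.Dom) (t : C ⊕ ℕ) :
    (mkFO (ar := ar) M g).termVal v t = M.termVal v t := by
  cases t <;> rfl

lemma mkFO_transE (M : Model P ar C S) (g : Pre → M.Prec) (v : ℕ → M.Dom) (π : Pre)
    (e : SE S) :
    (mkFO (ar := ar) M g).sat v (transE (ar := ar) (C := C) π e) ↔ g π ∈ M.σE e := by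
  induction e with
  | star => simp [transE, FOModel.sat, mkFO, Model.σE]
  | sym s => simp [transE, FOModel.sat, mkFO, Model.σE]
  | union e1 e2 ih1 ih2 =>
      simp only [transE, FOModel.sat, Model.σE, Set.mem_union, ih1, ih2]; tauto
  | inter e1 e2 ih1 ih2 =>
      simp only [transE, FOModel.sat, Model.σE, Set.mem_inter_iff, ih1, ih2]
  | diff e1 e2 ih1 ih2 =>
      simp only [transE, FOModel.sat, Model.σE, Set.mem_diff, ih1, ih2]

lemma mkFO_transF [Fintype Pre] (M : Model P ar C S) (g : Pre → M.Prec)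
    (hg : Function.Surjective g) (ψ : Fm P ar C S) :
    ∀ (π : Pre) (v : ℕ → M.Dom),
      (mkFO (ar := ar) M g).sat v (transF π ψ) ↔ M.sat (g π) v ψ := by
  induction ψ with
  | atom p ts =>
      intro π v
      show M.interpP (g π) p _ ↔ M.interpP (g π) p _
      exact iff_of_eq (congrArg _ (funext fun i => mkFO_termVal M g v (ts i)))
  | eq t1 t2 =>
      intro π v
      show (mkFO (ar := ar) M g).termVal v t1 = (mkFO (ar := ar) M g).termVal v t2 ↔ _
      rw [mkFO_termVal, mkFO_termVal]; rfl
  | neg φ ih =>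
      intro π v
      show ¬ _ ↔ ¬ _
      rw [ih]
  | conj φ χ ih1 ih2 =>
      intro π v
      show _ ∧ _ ↔ _ ∧ _
      rw [ih1, ih2]
  | all x φ ih =>
      intro π v
      show (∀ δ, _) ↔ (∀ δ, _)
      exact forall_congr' fun δ => ih π _
  | box e φ ih =>
      intro π v
      show (mkFO (ar := ar) M g).sat v (FO.conjList _) ↔ _
      refine (sat_conjList _ _ _).trans ?_
      simp only [List.mem_map, Finset.mem_toList, Finset.mem_univ, true_and]
      constructor
      · intro h ρ hρ
        obtain ⟨π', rfl⟩ := hg ρ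
        have h1 := h _ ⟨π', rfl⟩
        have h1 := (sat_impl _ _ _ _).mp h1
        exact (ih π' v).mp (h1 ((mkFO_transE M g v π' e).mpr hρ))
      · rintro h _ ⟨π', rfl⟩
        refine (sat_impl _ _ _ _).mpr ?_
        intro ha
        exact (ih π' v).mpr (h _ ((mkFO_transE M g v π' e).mp ha))

/-- Standpoint model built from an FO model over the translated vocabulary. -/
def ofFO [Nonempty Pre] (I : FOModel (TQ P S Pre) (tAr ar) C) : Model P ar C S where
  Dom := I.Dom
  dom_ne := I.dom_ne
  Prec := Pre
  prec_ne := inferInstance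
  σ := fun s => {π | I.interp (.inr (some s, π)) Fin.elim0}
  interpP := fun π p => I.interp (.inl (p, π))
  interpC := I.interpC

lemma interp0 (I : FOModel (TQ P S Pre) (tAr ar) C) (x : Option S × Pre)
    (a b : Fin 0 → I.Dom) : I.interp (.inr x) a ↔ I.interp (.inr x) b := by
  rw [Subsingleton.elim a b]

lemma ofFO_transE [Nonempty Pre] (I : FOModel (TQ P S Pre) (tAr ar) C)
    (hstar : ∀ π : Pre, I.interp (.inr (none, π)) Fin.elim0)
    (v : ℕ → I.Dom) (π : Pre) (e : SE S) :
    I.sat v (transE (ar := ar) (C := C) π e) ↔ π ∈ (ofFO (ar := ar) I).σE e := by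
  induction e with
  | star =>
      show I.interp (.inr (none, π)) _ ↔ _
      refine (interp0 I _ _ Fin.elim0).trans ?_
      simp [Model.σE, hstar π]
      exact Set.mem_univ _
  | sym s =>
      show I.interp (.inr (some s, π)) _ ↔ _
      refine (interp0 I _ _ Fin.elim0).trans ?_
      simp [Model.σE, ofFO]
      exact Iff.rfl
  | union e1 e2 ih1 ih2 =>
      simp only [transE, FOModel.sat, Model.σE, Set.mem_union, ih1, ih2]; exact not_and_or.trans (or_congr not_not not_not)
  | inter e1 e2 ih1 ih2 =>
      simp only [transE, FOModel.sat, Model.σE, Set.mem_inter_iff, ih1, ih2]; exact Iff.rfl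
  | diff e1 e2 ih1 ih2 =>
      simp only [transE, FOModel.sat, Model.σE, Set.mem_diff, ih1, ih2]; exact Iff.rfl

lemma ofFO_termVal [Nonempty Pre] (I : FOModel (TQ P S Pre) (tAr ar) C)
    (v : ℕ → I.Dom) (t : C ⊕ ℕ) :
    (ofFO (ar := ar) (S := S) I).termVal v t = I.termVal v t := by
  cases t <;> rfl

lemma ofFO_transF [Nonempty Pre] [Fintype Pre] (I : FOModel (TQ P S Pre) (tAr ar) C)
    (hstar : ∀ π : Pre, I.interp (.inr (none, π)) Fin.elim0)
    (ψ : Fm P ar C S) :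
    ∀ (π : Pre) (v : ℕ → I.Dom),
      I.sat v (transF π ψ) ↔ (ofFO (ar := ar) I).sat π v ψ := by
  induction ψ with
  | atom p ts =>
      intro π v
      show I.interp (.inl (p, π)) _ ↔ I.interp (.inl (p, π)) _
      exact iff_of_eq (congrArg _ (funext fun i => (ofFO_termVal (S := S) I v (ts i)).symm))
  | eq t1 t2 =>
      intro π v
      show I.termVal v t1 = I.termVal v t2 ↔
        ((ofFO (ar := ar) I).termVal v t1 = (ofFO (ar := ar) I).termVal v t2)
      rw [ofFO_termVal, ofFO_termVal]
      exact Iff.rfl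
  | neg φ ih =>
      intro π v
      show ¬ _ ↔ ¬ _
      rw [ih]
  | conj φ χ ih1 ih2 =>
      intro π v
      show _ ∧ _ ↔ _ ∧ _
      rw [ih1, ih2]
  | all x φ ih =>
      intro π v
      show (∀ δ, _) ↔ (∀ δ, _)
      exact forall_congr' fun δ => ih π _
  | box e φ ih =>
      intro π v
      show I.sat v (FO.conjList _) ↔ _
      rw [sat_conjList]
      simp only [List.mem_map, Finset.mem_toList, Finset.mem_univ, true_and]
      constructor
      · intro h ρ hρ
        have h1 := h _ ⟨ρ, rfl⟩
        rw [sat_impl] at h1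
        exact (ih ρ v).mp (h1 ((ofFO_transE I hstar v ρ e).mpr hρ))
      · rintro h _ ⟨π', rfl⟩
        rw [sat_impl]
        intro ha
        exact (ih π' v).mpr (h _ ((ofFO_transE I hstar v π' e).mp ha))

/-- n-satisfiability via translation: a sentential SSNF formula φ is
n-satisfiable iff Trans_n(φ) is satisfiable in plain first-order logic. -/
theorem nsat_iff_transN_sat (P : Type) (ar : P → ℕ) (C S : Type)
    (φ : Fm P ar C S) (hs : φ.sentential) (hn : φ.ssnf)
    (n : ℕ) (hpos : 0 < n) :
    nsatisfiable n φ ↔ fosatisfiable (TransN (Pre := Fin n) (ar := ar) (S := S) φ) := by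
  have hne : Nonempty (Fin n) := ⟨⟨0, hpos⟩⟩
  constructor
  · rintro ⟨M, hM, hcard⟩
    have hcpos : Nat.card M.Prec ≠ 0 := by omega
    have g0 : M.Prec ≃ Fin n := hcard ▸ Nat.equivFinOfCardPos hcpos
    set g : Fin n → M.Prec := fun i => g0.symm i with hgdef
    have hg : Function.Surjective g := fun ρ => ⟨g0 ρ, g0.symm_apply_apply ρ⟩
    refine ⟨mkFO (ar := ar) M g, fun v => ?_⟩
    refine ⟨?_, ?_⟩
    · rw [sat_conjList]
      rintro _ hmem
      simp only [List.mem_map, Finset.mem_toList, Finset.mem_univ, true_and] at hmem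
      obtain ⟨π, rfl⟩ := hmem
      exact (mkFO_transF M g hg φ π v).mpr (hM (g π) v)
    · rw [sat_conjList]
      rintro _ hmem
      simp only [List.mem_map, Finset.mem_toList, Finset.mem_univ, true_and] at hmem
      obtain ⟨π, rfl⟩ := hmem
      show (mkFO (ar := ar) M g).interp (.inr (none, π)) _
      exact trivial
  · rintro ⟨I, hI⟩
    have v0 : ℕ → I.Dom := fun _ => Classical.choice I.dom_ne
    have hstar : ∀ π : Fin n, I.interp (.inr (none, π)) Fin.elim0 := by
      intro π
      have h2 := (hI v0).2
      rw [sat_conjList] at h2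
      have := h2 _ (List.mem_map.mpr ⟨π, by simp, rfl⟩)
      show I.interp (.inr (none, π)) _
      rw [interp0 I _ _ (fun i => I.termVal v0 (Fin.elim0 i))]
      exact this
    refine ⟨ofFO (ar := ar) I, ?_, ?_⟩
    · intro π v
      have h1 := (hI v).1
      have h1 := (sat_conjList _ _ _).mp h1
      have := h1 _ (List.mem_map.mpr ⟨π, Finset.mem_toList.mpr (Finset.mem_univ _), rfl⟩)
      exact (ofFO_transF I hstar φ π v).mp this
    · simp [ofFO]

end FOSL
end

section
/- There exists a satisfiable (non-sentential) FOSL sentence all of whose models have infinitely many precisifications. Concretely, the conjunction of: transitivity of a binary predicate Btt, asymmetry of Btt, totality of Btt on distinct elements, seriality ∀x ∃y Btt(x,y), and ∀x ◇_* ¬∃y Btt(y,x), is satisfiable, but every standpoint structure satisfying it has an infinite set Π of precisifications. -/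
namespace FOSL

variable {P : Type} {ar : P → ℕ} {C S : Type}

variable {Q : Type} {arQ : Q → ℕ}

variable {Pre : Type}

/-- The signature with a single binary predicate Btt. -/
abbrev BSig : Unit → ℕ := fun _ => 2

def Btt (x y : ℕ) : Fm Unit BSig Empty Empty :=
  .atom () ![Sum.inr x, Sum.inr y]

/-- Transitivity of Btt. -/
def transAx : Fm Unit BSig Empty Empty :=
  .all 0 (.all 1 (.all 2 (Fm.impl (.conj (Btt 0 1) (Btt 1 2)) (Btt 0 2))))

/-- Asymmetry of Btt. -/
def asymAx : Fm Unit BSig Empty Empty :=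
  .all 0 (.all 1 (.neg (.conj (Btt 0 1) (Btt 1 0))))

/-- Totality of Btt on distinct elements. -/
def totalAx : Fm Unit BSig Empty Empty :=
  .all 0 (.all 1 (Fm.impl (.neg (.eq (Sum.inr 0) (Sum.inr 1)))
    (Fm.disj (Btt 0 1) (Btt 1 0))))

/-- Seriality: ∀x ∃y Btt(x,y). -/
def serialAx : Fm Unit BSig Empty Empty :=
  .all 0 (Fm.ex 1 (Btt 0 1))

/-- ∀x ◇_* ¬∃y Btt(y,x). -/
def minAx : Fm Unit BSig Empty Empty :=
  .all 0 (Fm.dia SE.star (.neg (Fm.ex 1 (Btt 1 0))))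

def noSmallModel : Fm Unit BSig Empty Empty :=
  .conj transAx (.conj asymAx (.conj totalAx (.conj serialAx minAx)))

/-! ### Auxiliary material for the theorem -/

/-- A "rank" function on ℤ: injective, nonnegative, with `rwit 0 = 0` and
every value strictly exceeded by another. -/
def rwit (k : ℤ) : ℤ := if 0 ≤ k then 2 * k else 2 * (-k) - 1

lemma rwit_nonneg (k : ℤ) : 0 ≤ rwit k := by unfold rwit; split <;> omega

lemma rwit_zero : rwit 0 = 0 := by simp [rwit]

lemma rwit_up (k : ℤ) : ∃ k', rwit k < rwit k' := by
  by_cases h : 0 ≤ k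
  · exact ⟨k + 1, by unfold rwit; split <;> split <;> omega⟩
  · exact ⟨k - 1, by unfold rwit; split <;> split <;> omega⟩

lemma rwit_inj {a b : ℤ} (h : rwit a = rwit b) : a = b := by
  unfold rwit at h; split at h <;> split at h <;> omega

/-- The witness model: domain ℤ, precisifications ℤ; at precisification π,
`Btt x y` holds iff `rwit (x - π) < rwit (y - π)`. -/
def Mwit : Model Unit BSig Empty Empty where
  Dom := ℤ
  dom_ne := ⟨0⟩
  Prec := ℤ
  prec_ne := ⟨0⟩
  σ := fun s => s.elim
  interpP := fun π _ args => rwit (args 0 - π) < rwit (args 1 - π)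
  interpC := Empty.elim

section extract

variable {M : Model Unit BSig Empty Empty}

/-- The interpretation of Btt at π. -/
def MB (M : Model Unit BSig Empty Empty) (π : M.Prec) (a b : M.Dom) : Prop :=
  M.interpP π () ![a, b]

lemma interp_pair (π : M.Prec) (v : ℕ → M.Dom) (x y : ℕ) :
    (M.interpP π () fun i => M.termVal v (![Sum.inr x, Sum.inr y] i))
      = MB M π (v x) (v y) := by
  have h : (fun i => M.termVal v (![Sum.inr x, Sum.inr y] i)) = ![v x, v y] := by
    funext i; fin_cases i <;> rfl
  rw [h]; rfl

lemma extract_trans (h : M.satM noSmallModel) (π : M.Prec) (a b c : M.Dom)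
    (hab : MB M π a b) (hbc : MB M π b c) : MB M π a c := by
  have h1 := (h π (fun _ => a)).1
  simp only [transAx, Fm.impl, Btt, Model.sat, interp_pair] at h1
  have h2 := h1 a b c
  simp only [Function.update] at h2
  norm_num at h2
  tauto

lemma extract_asym (h : M.satM noSmallModel) (π : M.Prec) (a b : M.Dom)
    (hab : MB M π a b) : ¬ MB M π b a := by
  have h1 := (h π (fun _ => a)).2.1
  simp only [asymAx, Btt, Model.sat, interp_pair] at h1
  have h2 := h1 a b
  simp only [Function.update] at h2
  norm_num at h2
  tauto

lemma extract_total (h : M.satM noSmallModel) (π : M.Prec) (a b : M.Dom)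
    (hne : a ≠ b) : MB M π a b ∨ MB M π b a := by
  have h1 := (h π (fun _ => a)).2.2.1
  simp only [totalAx, Fm.impl, Fm.disj, Btt, Model.sat, interp_pair] at h1
  have h2 := h1 a b
  simp only [Function.update] at h2
  norm_num at h2
  by_cases hab : MB M π a b
  · exact Or.inl hab
  · exact Or.inr (h2 hne hab)

lemma extract_serial (h : M.satM noSmallModel) (π : M.Prec) (a : M.Dom) :
    ∃ b, MB M π a b := by
  have h1 := (h π (fun _ => a)).2.2.2.1
  simp only [serialAx, Fm.ex, Btt, Model.sat, interp_pair] at h1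
  have h2 := h1 a
  simp only [Function.update] at h2
  norm_num at h2
  exact h2

lemma extract_min (h : M.satM noSmallModel) (a : M.Dom) :
    ∃ π : M.Prec, ∀ b, ¬ MB M π b a := by
  obtain ⟨π0⟩ := M.prec_ne
  have h1 := (h π0 (fun _ => a)).2.2.2.2
  simp only [minAx, Fm.dia, Fm.ex, Btt, Model.sat, Model.σE, Set.mem_univ,
    interp_pair] at h1
  have h2 := h1 a
  simp only [Function.update] at h2
  norm_num at h2
  exact h2

end extract

/-- There is a satisfiable (non-sentential) FOSL sentence all of whose models
have infinitely many precisifications. -/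
theorem exists_sentence_only_infinite_models :
    satisfiable noSmallModel ∧
      ∀ M : Model Unit BSig Empty Empty, M.satM noSmallModel →
        Infinite M.Prec := by
  constructor
  · -- satisfiability via the witness model
    refine ⟨Mwit, ?_⟩
    rintro (π : ℤ) v
    refine ⟨?_, ?_, ?_, ?_, ?_⟩
    · -- transitivity
      simp only [transAx, Fm.impl, Btt, Model.sat, interp_pair]
      intro a b c
      simp only [Function.update, MB, Mwit]
      norm_num
      omega
    · -- asymmetry
      simp only [asymAx, Btt, Model.sat, interp_pair]
      intro a b
      simp only [Function.update, MB, Mwit]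
      norm_num
      omega
    · -- totality
      simp only [totalAx, Fm.impl, Fm.disj, Btt, Model.sat, Model.termVal, interp_pair]
      intro a b
      simp only [Function.update_apply, MB, Mwit]
      norm_num
      intro hne h1
      rcases h1.lt_or_eq with h | h
      · exact h
      · exact absurd (by have := rwit_inj h; omega) hne
    · -- seriality
      simp only [serialAx, Fm.ex, Btt, Model.sat, interp_pair]
      rintro (a : ℤ) hall
      simp only [Function.update_apply, MB, Mwit, Model.termVal] at hall
      norm_num at hall
      obtain ⟨k', hk'⟩ := rwit_up (a - π)
      have := hall (k' + π)
      simp only [add_sub_cancel_right] at this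
      erw [Function.update_self] at this
      omega
    · -- minimality
      simp only [minAx, Fm.dia, Fm.ex, Btt, Model.sat, Model.σE, Set.mem_univ, interp_pair]
      rintro (a : ℤ) hall
      have h1 := hall a
      simp only [Function.update_apply, MB, Mwit, Model.termVal] at h1
      norm_num at h1
      obtain ⟨y, hy⟩ := h1
      erw [Function.update_self, sub_self, rwit_zero] at hy
      exact absurd (rwit_nonneg (y - a)) (by omega)
  · -- every model has infinitely many precisifications
    intro M hM
    obtain ⟨π0⟩ := M.prec_ne
    -- the domain is infinite: build a strictly ascending chain
    obtain ⟨d0⟩ := M.dom_ne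
    let f : ℕ → M.Dom := fun n => Nat.rec d0
      (fun _ x => Classical.choose (extract_serial hM π0 x)) n
    have hf : ∀ n, MB M π0 (f n) (f (n + 1)) := fun n =>
      Classical.choose_spec (extract_serial hM π0 (f n))
    have hchain : ∀ n m, m < n → MB M π0 (f m) (f n) := by
      intro n
      induction n with
      | zero => intro m h; omega
      | succ k ih =>
        intro m hmn
        rcases Nat.lt_succ_iff_lt_or_eq.mp hmn with h | h
        · exact extract_trans hM π0 _ _ _ (ih m h) (hf k)
        · subst h; exact hf _
    have hfinj : Function.Injective f := by
      intro m n hmn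
      by_contra hne
      rcases Nat.lt_or_ge m n with h | h
      · exact extract_asym hM π0 _ _ (hchain n m h) (hmn ▸ hchain n m h)
      · have h' : n < m := lt_of_le_of_ne h (Ne.symm hne)
        exact extract_asym hM π0 _ _ (hchain m n h') (hmn ▸ hchain m n h')
    have hDomInf : Infinite M.Dom := Infinite.of_injective f hfinj
    -- map each domain element to a precisification where it is minimal
    let g : M.Dom → M.Prec := fun a => Classical.choose (extract_min hM a)
    have hg : ∀ a b, ¬ MB M (g a) b a := fun a =>
      Classical.choose_spec (extract_min hM a)
    have hginj : Function.Injective g := by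
      intro a b hab
      by_contra hne
      rcases extract_total hM (g a) a b hne with h | h
      · exact hg b a (hab ▸ h)
      · exact hg a b h
    exact Infinite.of_injective g hginj

end FOSL
end
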